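/- arXiv:2511.10228 — 2 statements merged into one kernel-verified Lean document; each statement's English description precedes it below -/
import Mathlib

section
/- Let d, k be positive natural numbers, let X be a finite set of vectors in Euclidean space ℝ^d, and let γ ≥ 0 be such that ‖x‖₂ ≤ γ for every x ∈ X. Then for every μ in the convex hull of X there exist (not necessarily distinct) vectors x₁, …, x_k ∈ X such that ‖μ − (1/k)·(x₁ + ⋯ + x_k)‖₂ ≤ γ/√k. In particular, for every ε > 0, taking any k ≥ γ²/ε² yields a k-uniform vector μ′ in the convex hull of X with ‖μ − μ′‖₂ ≤ ε. -/
open Finset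

/-- A weighted average dominates some term: if weights are nonnegative and sum to 1,
some point's value is at most the weighted average. -/
lemma exists_le_weighted_avg {α : Type*} (s : Finset α) (w a : α → ℝ)
    (h0 : ∀ x ∈ s, 0 ≤ w x) (h1 : ∑ x ∈ s, w x = 1) :
    ∃ x ∈ s, a x ≤ ∑ x ∈ s, w x * a x := by
  by_contra h
  push_neg at h
  obtain ⟨x₀, hx₀, hw₀⟩ : ∃ x ∈ s, 0 < w x := by
    by_contra h2
    push_neg at h2
    have : ∑ x ∈ s, w x = 0 := Finset.sum_eq_zero fun x hx => le_antisymm (h2 x hx) (h0 x hx)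
    simp [this] at h1
  have key : ∑ x ∈ s, w x * (∑ y ∈ s, w y * a y) < ∑ x ∈ s, w x * a x := by
    refine Finset.sum_lt_sum (fun x hx => ?_) ⟨x₀, hx₀, ?_⟩
    · exact mul_le_mul_of_nonneg_left (le_of_lt (h x hx)) (h0 x hx)
    · exact mul_lt_mul_of_pos_left (h x₀ hx₀) hw₀
  rw [← Finset.sum_mul, h1, one_mul] at key
  exact lt_irrefl _ key

/-- Inductive core: there are `n` points of `X` whose sum is within `√(n C)` of `n • μ`,
where `C = ∑ w x ‖μ - x‖²` for a convex-combination representation of `μ`. -/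
lemma approx_caratheodory_aux (d : ℕ) (X : Finset (EuclideanSpace ℝ (Fin d)))
    (w : EuclideanSpace ℝ (Fin d) → ℝ) (h0 : ∀ x ∈ X, 0 ≤ w x)
    (h1 : ∑ x ∈ X, w x = 1) (μ : EuclideanSpace ℝ (Fin d))
    (h2 : ∑ x ∈ X, w x • x = μ) (n : ℕ) :
    ∃ f : Fin n → EuclideanSpace ℝ (Fin d), (∀ i, f i ∈ X) ∧
      ‖(n : ℝ) • μ - ∑ i, f i‖ ^ 2 ≤ n * ∑ x ∈ X, w x * ‖μ - x‖ ^ 2 := by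
  set C : ℝ := ∑ x ∈ X, w x * ‖μ - x‖ ^ 2 with hC
  have hC0 : 0 ≤ C :=
    Finset.sum_nonneg fun x hx => mul_nonneg (h0 x hx) (sq_nonneg _)
  have hzero : ∑ x ∈ X, w x • (μ - x) = 0 := by
    simp only [smul_sub, Finset.sum_sub_distrib, ← Finset.sum_smul, h1, one_smul, h2, sub_self]
  induction n with
  | zero =>
    refine ⟨Fin.elim0, fun i => i.elim0, ?_⟩
    simp
  | succ n ih =>
    obtain ⟨f, hf, hbd⟩ := ih
    set v : EuclideanSpace ℝ (Fin d) := (n : ℝ) • μ - ∑ i, f i with hv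
    have havg : ∑ x ∈ X, w x * ‖v + (μ - x)‖ ^ 2 = ‖v‖ ^ 2 + C := by
      have expand : ∀ x, ‖v + (μ - x)‖ ^ 2
          = ‖v‖ ^ 2 + 2 * inner ℝ v (μ - x) + ‖μ - x‖ ^ 2 :=
        fun x => norm_add_sq_real v (μ - x)
      calc ∑ x ∈ X, w x * ‖v + (μ - x)‖ ^ 2
          = ∑ x ∈ X, (w x * ‖v‖ ^ 2 + 2 * (w x * inner ℝ v (μ - x)) + w x * ‖μ - x‖ ^ 2) := by
            refine Finset.sum_congr rfl fun x hx => ?_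
            rw [expand x]; ring
        _ = (∑ x ∈ X, w x) * ‖v‖ ^ 2 + 2 * (∑ x ∈ X, w x * inner ℝ v (μ - x)) + C := by
            rw [Finset.sum_add_distrib, Finset.sum_add_distrib, ← Finset.mul_sum,
              Finset.sum_mul, hC]
        _ = ‖v‖ ^ 2 + C := by
            have : ∑ x ∈ X, w x * inner ℝ v (μ - x) = (0 : ℝ) := by
              have h := congrArg (fun y => (inner ℝ v y : ℝ)) hzero
              simp only [inner_zero_right, inner_sum, real_inner_smul_right] at h
              exact h
            rw [this, h1]; ring
    obtain ⟨x, hxX, hxle⟩ := exists_le_weighted_avg X w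
      (fun x => ‖v + (μ - x)‖ ^ 2) h0 h1
    rw [havg] at hxle
    refine ⟨Fin.cons x f, ?_, ?_⟩
    · intro i
      refine Fin.cases ?_ ?_ i
      · exact hxX
      · exact fun j => hf j
    · have hsum : ∑ i, Fin.cons x f i = x + ∑ i, f i := Fin.sum_cons x f
      have heq : ((n + 1 : ℕ) : ℝ) • μ - ∑ i, Fin.cons x f i = v + (μ - x) := by
        rw [hsum, hv]
        push_cast
        rw [add_smul, one_smul]
        abel
      rw [heq]
      push_cast
      calc ‖v + (μ - x)‖ ^ 2 ≤ ‖v‖ ^ 2 + C := hxle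
        _ ≤ n * C + C := by linarith
        _ = (n + 1) * C := by ring

/-- Approximate Carathéodory theorem (ℓ₂ case): if every vector of the finite set `X`
in Euclidean space `ℝ^d` has norm at most `γ`, then every `μ` in the convex hull of `X`
is within `γ/√k` of an average of `k` vectors of `X` (repetitions allowed); in
particular, for any `ε > 0` and `k ≥ γ²/ε²`, there is a `k`-uniform vector `μ'` in the
convex hull of `X` with `‖μ − μ'‖₂ ≤ ε`. -/
theorem approx_caratheodory (d k : ℕ) (hd : 0 < d) (hk : 0 < k)
    (X : Finset (EuclideanSpace ℝ (Fin d))) (γ : ℝ) (hγ : 0 ≤ γ)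
    (hbound : ∀ x ∈ X, ‖x‖ ≤ γ)
    (μ : EuclideanSpace ℝ (Fin d))
    (hμ : μ ∈ convexHull ℝ (X : Set (EuclideanSpace ℝ (Fin d)))) :
    (∃ f : Fin k → EuclideanSpace ℝ (Fin d), (∀ i, f i ∈ X) ∧
      ‖μ - (1 / (k : ℝ)) • ∑ i, f i‖ ≤ γ / Real.sqrt k) ∧
    (∀ ε : ℝ, 0 < ε → γ ^ 2 / ε ^ 2 ≤ (k : ℝ) →
      ∃ f : Fin k → EuclideanSpace ℝ (Fin d), (∀ i, f i ∈ X) ∧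
        (1 / (k : ℝ)) • ∑ i, f i ∈ convexHull ℝ (X : Set (EuclideanSpace ℝ (Fin d))) ∧
        ‖μ - (1 / (k : ℝ)) • ∑ i, f i‖ ≤ ε) := by
  -- Extract convex combination
  rw [Finset.mem_convexHull] at hμ
  obtain ⟨w, h0, h1, h2⟩ := hμ
  rw [Finset.centerMass_eq_of_sum_1 _ _ h1] at h2
  simp only [id] at h2
  set C : ℝ := ∑ x ∈ X, w x * ‖μ - x‖ ^ 2 with hCdef
  -- Bound C ≤ γ²
  have hμnorm : ‖μ‖ ^ 2 = inner ℝ μ μ := (real_inner_self_eq_norm_sq μ).symm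
  have hCle : C ≤ γ ^ 2 := by
    have expand : ∀ x : EuclideanSpace ℝ (Fin d),
        ‖μ - x‖ ^ 2 = ‖μ‖ ^ 2 - 2 * inner ℝ μ x + ‖x‖ ^ 2 := fun x => by
      have := norm_sub_sq_real μ x
      linarith [this]
    have hCval : C = ∑ x ∈ X, w x * ‖x‖ ^ 2 - ‖μ‖ ^ 2 := by
      calc C = ∑ x ∈ X, (w x * ‖μ‖ ^ 2 - 2 * (w x * inner ℝ μ x) + w x * ‖x‖ ^ 2) := by
            refine Finset.sum_congr rfl fun x hx => ?_
            rw [expand x]; ring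
        _ = (∑ x ∈ X, w x) * ‖μ‖ ^ 2 - 2 * (∑ x ∈ X, w x * inner ℝ μ x)
              + ∑ x ∈ X, w x * ‖x‖ ^ 2 := by
            rw [Finset.sum_add_distrib, Finset.sum_sub_distrib, Finset.sum_mul,
              ← Finset.mul_sum]
        _ = ∑ x ∈ X, w x * ‖x‖ ^ 2 - ‖μ‖ ^ 2 := by
            have : ∑ x ∈ X, w x * inner ℝ μ x = ‖μ‖ ^ 2 := by
              rw [hμnorm]
              have h := congrArg (fun y => (inner ℝ μ y : ℝ)) h2
              simp only [inner_sum, real_inner_smul_right] at h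
              exact h
            rw [this, h1]; ring
    have hsumle : ∑ x ∈ X, w x * ‖x‖ ^ 2 ≤ γ ^ 2 := by
      calc ∑ x ∈ X, w x * ‖x‖ ^ 2 ≤ ∑ x ∈ X, w x * γ ^ 2 := by
            refine Finset.sum_le_sum fun x hx => ?_
            exact mul_le_mul_of_nonneg_left
              (pow_le_pow_left₀ (norm_nonneg _) (hbound x hx) 2) (h0 x hx)
        _ = γ ^ 2 := by rw [← Finset.sum_mul, h1, one_mul]
    nlinarith [sq_nonneg ‖μ‖]
  have hC0 : 0 ≤ C :=
    Finset.sum_nonneg fun x hx => mul_nonneg (h0 x hx) (sq_nonneg _)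
  -- Apply the inductive lemma
  obtain ⟨f, hf, hbd⟩ := approx_caratheodory_aux d X w h0 h1 μ h2 k
  have hkpos : (0 : ℝ) < (k : ℝ) := by exact_mod_cast hk
  have hsqrtk : (0 : ℝ) < Real.sqrt k := Real.sqrt_pos.2 hkpos
  -- main distance bound
  have hkey : ‖μ - (1 / (k : ℝ)) • ∑ i, f i‖ ≤ γ / Real.sqrt k := by
    have hrw : μ - (1 / (k : ℝ)) • ∑ i, f i
        = (1 / (k : ℝ)) • ((k : ℝ) • μ - ∑ i, f i) := by
      rw [smul_sub, smul_smul]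
      rw [one_div_mul_cancel (ne_of_gt hkpos), one_smul]
    rw [hrw, norm_smul]
    have hn2 : ‖(k : ℝ) • μ - ∑ i, f i‖ ^ 2 ≤ k * γ ^ 2 := by
      calc ‖(k : ℝ) • μ - ∑ i, f i‖ ^ 2 ≤ k * C := hbd
        _ ≤ k * γ ^ 2 := by
            exact mul_le_mul_of_nonneg_left hCle (le_of_lt hkpos)
    have hn : ‖(k : ℝ) • μ - ∑ i, f i‖ ≤ Real.sqrt k * γ := by
      have : Real.sqrt (‖(k : ℝ) • μ - ∑ i, f i‖ ^ 2) ≤ Real.sqrt (k * γ ^ 2) :=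
        Real.sqrt_le_sqrt hn2
      rwa [Real.sqrt_sq (norm_nonneg _), Real.sqrt_mul (le_of_lt hkpos) (γ ^ 2),
        Real.sqrt_sq hγ] at this
    calc ‖(1 / (k : ℝ))‖ * ‖(k : ℝ) • μ - ∑ i, f i‖
        ≤ (1 / (k : ℝ)) * (Real.sqrt k * γ) := by
          rw [Real.norm_eq_abs, abs_of_pos (by positivity)]
          exact mul_le_mul_of_nonneg_left hn (by positivity)
      _ = γ / Real.sqrt k := by
          have hk' : Real.sqrt k * Real.sqrt k = (k : ℝ) :=
            Real.mul_self_sqrt (le_of_lt hkpos)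
          rw [eq_div_iff (ne_of_gt hsqrtk)]
          field_simp
          linear_combination γ * hk'
  have hmem : (1 / (k : ℝ)) • ∑ i, f i ∈
      convexHull ℝ (X : Set (EuclideanSpace ℝ (Fin d))) := by
    have : (1 / (k : ℝ)) • ∑ i, f i = ∑ i : Fin k, (1 / (k : ℝ)) • f i := by
      rw [Finset.smul_sum]
    rw [this]
    refine (convex_convexHull ℝ _).sum_mem (fun i _ => by positivity) ?_
      (fun i _ => subset_convexHull ℝ _ (hf i))
    simp [Finset.card_univ]
    field_simp
  refine ⟨⟨f, hf, hkey⟩, fun ε hε hkε => ⟨f, hf, hmem, ?_⟩⟩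
  refine hkey.trans ?_
  rw [div_le_iff₀ hsqrtk]
  have hγ2 : γ ^ 2 ≤ (k : ℝ) * ε ^ 2 := by
    rw [div_le_iff₀ (by positivity)] at hkε
    linarith
  have : Real.sqrt (γ ^ 2) ≤ Real.sqrt ((k : ℝ) * ε ^ 2) := Real.sqrt_le_sqrt hγ2
  rw [Real.sqrt_sq hγ, Real.sqrt_mul (le_of_lt hkpos),
    Real.sqrt_sq (le_of_lt hε)] at this
  linarith [this]
end

section
/- Let E be a finite type, a ≥ 0, and for each e ∈ E let ℓ_e : ℝ → ℝ be an a-Lipschitz function. Let M be a positive natural number and let 𝒫 be a family of finite subsets of E, each of cardinality at most M. Let f, g : E → ℝ with |f e − g e| ≤ ε/(2·a·M) for all e ∈ E, where ε > 0 and a > 0. Suppose there are L ∈ ℝ and a subfamily U ⊆ 𝒫 such that ∑_{e ∈ p} ℓ_e(f e) = L for every p ∈ U and ∑_{e ∈ p} ℓ_e(f e) ≥ L for every p ∈ 𝒫. Then for every p ∈ U and every q ∈ 𝒫, ∑_{e ∈ p} ℓ_e(g e) ≤ ∑_{e ∈ q} ℓ_e(g e) + ε. -/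
/-- If `f` is an equilibrium flow (all paths in `U` have common cost `L` and no path in
`Paths` is cheaper) for `a`-Lipschitz edge cost functions, and `g` is within `ε/(2aM)` of `f`
on every edge, then `g` satisfies the `ε`-Nash condition on the family `Paths` of paths,
each path being a set of at most `M` edges with cost `∑_{e∈p} ℓ_e(x_e)`. -/
theorem eps_nash_of_close_flow {E : Type*} [Fintype E] (a : ℝ) (ha : 0 < a)
    (ℓ : E → ℝ → ℝ) (hlip : ∀ e x y, |ℓ e x - ℓ e y| ≤ a * |x - y|)
    (M : ℕ) (hM : 0 < M) (Paths : Set (Finset E)) (hcard : ∀ p ∈ Paths, p.card ≤ M)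
    (f g : E → ℝ) (ε : ℝ) (hε : 0 < ε)
    (hfg : ∀ e, |f e - g e| ≤ ε / (2 * a * M))
    (L : ℝ) (U : Set (Finset E)) (hU : U ⊆ Paths)
    (heq : ∀ p ∈ U, ∑ e ∈ p, ℓ e (f e) = L)
    (hge : ∀ p ∈ Paths, L ≤ ∑ e ∈ p, ℓ e (f e)) :
    ∀ p ∈ U, ∀ q ∈ Paths, ∑ e ∈ p, ℓ e (g e) ≤ ∑ e ∈ q, ℓ e (g e) + ε := by
  have hM' : (0:ℝ) < M := by exact_mod_cast hM
  have key : ∀ p ∈ Paths, |∑ e ∈ p, ℓ e (g e) - ∑ e ∈ p, ℓ e (f e)| ≤ ε / 2 := by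
    intro p hp
    rw [← Finset.sum_sub_distrib]
    calc |∑ e ∈ p, (ℓ e (g e) - ℓ e (f e))| ≤ ∑ e ∈ p, |ℓ e (g e) - ℓ e (f e)| :=
          Finset.abs_sum_le_sum_abs _ _
      _ ≤ ∑ e ∈ p, ε / (2 * M) := by
          apply Finset.sum_le_sum
          intro e _
          calc |ℓ e (g e) - ℓ e (f e)| ≤ a * |g e - f e| := hlip e _ _
            _ ≤ a * (ε / (2 * a * M)) := by
                have := hfg e
                rw [abs_sub_comm] at this
                exact mul_le_mul_of_nonneg_left this ha.le
            _ = ε / (2 * M) := by field_simp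
      _ = p.card * (ε / (2 * M)) := by simp [Finset.sum_const, nsmul_eq_mul]
      _ ≤ M * (ε / (2 * M)) := by
          apply mul_le_mul_of_nonneg_right
          · exact_mod_cast hcard p hp
          · positivity
      _ = ε / 2 := by field_simp
  intro p hp q hq
  have h1 := abs_le.mp (key p (hU hp))
  have h2 := abs_le.mp (key q hq)
  have := heq p hp
  have := hge q hq
  linarith [h1.2, h2.1]
end
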